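/- Let Θ : ℂ^n → ℂ^n be a vector field with global complex-time flow ψ : ℂ × ℂ^n → ℂ^n, and let f, c : ℂ^n → ℂ satisfy f(ψ(s,x)) = f(x) + s·c(x) for all s ∈ ℂ, x ∈ ℂ^n. Let E : ℂ → ℂ be the entire function with w·E(w) = e^w − 1 and E(0) = 1. Then Φ : ℂ × ℂ^n → ℂ^n defined by Φ(t,x) = ψ(t·f(x)·E(t·c(x)), x) is a global complex-time flow of the vector field f·Θ : x ↦ f(x)·Θ(x). In particular, if Θ is complete and Θ(f) lies in the kernel of Θ, then f·Θ is complete. -/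

import Mathlib

/-- if `ψ` is a global complex-time flow of `Θ`, `f (ψ s x) = f x + s * c x`,
and `E` is the entire function with `w * E w = e^w - 1` and `E 0 = 1`, then
`Φ t x = ψ (t * f x * E (t * c x)) x` is a global complex-time flow of the field
`x ↦ f x • Θ x`. In particular, if `Θ` is complete and `Θ(f) ∈ Ker Θ`, then `f·Θ` is
complete. -/
theorem stmt_9 (n : ℕ) (Θ : (Fin n → ℂ) → (Fin n → ℂ))
    (ψ : ℂ → (Fin n → ℂ) → (Fin n → ℂ))
    (hψ0 : ∀ x, ψ 0 x = x)
    (hψ : ∀ (s : ℂ) (x : Fin n → ℂ), HasDerivAt (fun r => ψ r x) (Θ (ψ s x)) s)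
    (f c : (Fin n → ℂ) → ℂ)
    (hfc : ∀ (s : ℂ) (x : Fin n → ℂ), f (ψ s x) = f x + s * c x)
    (E : ℂ → ℂ) (hE : Differentiable ℂ E)
    (hEw : ∀ w : ℂ, w * E w = Complex.exp w - 1) (hE0 : E 0 = 1)
    (Φ : ℂ → (Fin n → ℂ) → (Fin n → ℂ))
    (hΦ : ∀ (t : ℂ) (x : Fin n → ℂ), Φ t x = ψ (t * f x * E (t * c x)) x) :
    (∀ x, Φ 0 x = x) ∧
    (∀ (t : ℂ) (x : Fin n → ℂ),
      HasDerivAt (fun s => Φ s x) ((fun y => f y • Θ y) (Φ t x)) t) := by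
  -- key derivative: d/dt (t * E (t*c)) = exp (t*c)
  have hD : ∀ (γ t : ℂ), HasDerivAt (fun s : ℂ => s * E (s * γ)) (Complex.exp (t * γ)) t := by
    intro γ t
    by_cases hγ : γ = 0
    · subst hγ
      have : (fun s : ℂ => s * E (s * 0)) = fun s : ℂ => s := by
        funext s; simp [hE0]
      rw [this]
      exact (hasDerivAt_id' t).congr_deriv (by simp)
    · have heq : (fun s : ℂ => s * E (s * γ)) =
          fun s : ℂ => (Complex.exp (s * γ) - 1) / γ := by
        funext s
        have := hEw (s * γ)
        field_simp
        linear_combination this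
      rw [heq]
      have h1 : HasDerivAt (fun s : ℂ => Complex.exp (s * γ)) (Complex.exp (t * γ) * γ) t :=
        (hasDerivAt_mul_const γ).cexp
      have h2 := (h1.sub_const 1).div_const γ
      exact h2.congr_deriv (mul_div_cancel_right₀ _ hγ)
  constructor
  · intro x
    rw [hΦ]
    simp [hψ0]
  · intro t x
    have hg : HasDerivAt (fun s : ℂ => s * f x * E (s * c x))
        (f x * Complex.exp (t * c x)) t := by
      have : (fun s : ℂ => s * f x * E (s * c x)) =
          fun s : ℂ => f x * (s * E (s * c x)) := by
        funext s; ring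
      rw [this]
      simpa [mul_comm] using (hD (c x) t).const_mul (f x)
    have hcomp := (hψ (t * f x * E (t * c x)) x).scomp t hg
    have hfun : (fun s : ℂ => ψ (s * f x * E (s * c x)) x) = fun s => Φ s x := by
      funext s; rw [hΦ]
    simp only [Function.comp_def] at hcomp
    rw [hfun] at hcomp
    have hval : f (Φ t x) = f x * Complex.exp (t * c x) := by
      rw [hΦ, hfc]
      have := hEw (t * c x)
      ring_nf
      ring_nf at this
      linear_combination f x * this
    rw [← hΦ] at hcomp
    simpa [hval, smul_smul] using hcomp
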